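/- With the notation and hypotheses of the Mδ-GLMB fusion setting (Mδ-GLMB densities π_i with parameters {(w_i(L), p_i(·, ℓ; L))}, positive weights ω_i summing to 1, and η^{(L)}(ℓ) = ∫_X ∏_{i∈I} p_i(x, ℓ; L)^{ω_i} dμ(x) finite), the set integral of the weighted geometric product equals ∑_{L ⊆ 𝕃} ∫_{X^L} ∏_{i∈I} π_i(L, x)^{ω_i} dμ^L(x) = ∑_{J ⊆ 𝕃} ∏_{i∈I} w_i(J)^{ω_i} ∏_{ℓ∈J} η^{(J)}(ℓ). -/

import Mathlib

open MeasureTheory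

/-- Set integral of the weighted geometric product of Mδ-GLMB densities:
`∑_{L ⊆ 𝕃} ∫_{X^L} ∏ i, π_i(L,x)^{ω i} dμ^L = ∑_{J ⊆ 𝕃} ∏ i, w i J ^ ω i * ∏_{ℓ∈J} η^{(J)}(ℓ)`. -/
theorem mdglmb_geometric_product_set_integral
    {X : Type*} [MeasurableSpace X] (μ : Measure X) [SigmaFinite μ]
    {𝕃 : Type*} [Fintype 𝕃]
    {I : Type*} [Fintype I]
    (w : I → Finset 𝕃 → ℝ) (p : I → X → 𝕃 → Finset 𝕃 → ℝ)
    (hwnn : ∀ i L, 0 ≤ w i L) (hwsum : ∀ i, ∑ L : Finset 𝕃, w i L = 1)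
    (hpmeas : ∀ i ℓ L, Measurable (fun x => p i x ℓ L))
    (hpnn : ∀ i x ℓ L, 0 ≤ p i x ℓ L)
    (hpnorm : ∀ i ℓ L, ∫ x, p i x ℓ L ∂μ = 1)
    (ω : I → ℝ) (hωpos : ∀ i, 0 < ω i) (hωsum : ∑ i, ω i = 1)
    (η : Finset 𝕃 → 𝕃 → ℝ)
    (hη : ∀ L ℓ, η L ℓ = ∫ x, ∏ i, p i x ℓ L ^ ω i ∂μ)
    (hηfin : ∀ (L : Finset 𝕃) (ℓ : 𝕃),
      Integrable (fun x => ∏ i, p i x ℓ L ^ ω i) μ) :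
    ∑ L : Finset 𝕃,
      ∫ x, ∏ i, (w i L * ∏ ℓ : L, p i (x ℓ) ℓ L) ^ ω i
        ∂(Measure.pi fun _ : L => μ) =
    ∑ J : Finset 𝕃, (∏ i, w i J ^ ω i) * ∏ ℓ : J, η J ℓ := by
  letI : MeasureSpace X := ⟨μ⟩
  refine Finset.sum_congr rfl fun L _ => ?_
  have h1 : ∀ x : L → X,
      ∏ i, (w i L * ∏ ℓ : L, p i (x ℓ) ℓ L) ^ ω i =
      (∏ i, w i L ^ ω i) * ∏ ℓ : L, ∏ i, p i (x ℓ) ℓ L ^ ω i := by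
    intro x
    have step : ∀ i ∈ Finset.univ, (w i L * ∏ ℓ : L, p i (x ℓ) ℓ L) ^ ω i =
        w i L ^ ω i * ∏ ℓ : L, p i (x ℓ) ℓ L ^ ω i := by
      intro i _
      rw [Real.mul_rpow (hwnn i L) (Finset.prod_nonneg fun ℓ _ => hpnn i (x ℓ) ℓ L)]
      congr 1
      exact (Real.finset_prod_rpow _ _ (fun ℓ _ => hpnn i (x ℓ) ℓ L) _).symm
    rw [Finset.prod_congr rfl step, Finset.prod_mul_distrib, Finset.prod_comm]
  simp_rw [h1]
  rw [integral_const_mul]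
  have h2 : (∫ x : L → X, ∏ ℓ : L, ∏ i, p i (x ℓ) ℓ L ^ ω i
      ∂(Measure.pi fun _ : L => μ)) = ∏ ℓ : L, η L ℓ := by
    have : (Measure.pi fun _ : L => μ) = (volume : Measure (L → X)) := rfl
    rw [this, MeasureTheory.integral_fintype_prod_volume_eq_prod
      (ι := (L : Type _)) (fun ℓ x => ∏ i, p i x ℓ L ^ ω i)]
    exact Finset.prod_congr rfl fun ℓ _ => (hη L ℓ).symm
  rw [h2]
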